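/- B̃ = {(A, [B]_J) : A, B ∈ B with [A]_{B_reg} = [B]_{B_reg}} with coordinatewise operations is a generalized Boolean algebra, and its regular ideal is B̃_reg = {(A, [∅]_J) : A ∈ B_reg}. -/

import Mathlib

section Stmt10Aux

variable {𝓑 : Type*} [GeneralizedBooleanAlgebra 𝓑]

private lemma stmt10_sdiff_key (x y W : 𝓑) : (x ⊔ W) \ (y ⊔ W) ⊔ W = x \ y ⊔ W := by
  have h1 : W \ (y ⊔ W) = ⊥ := sdiff_eq_bot_iff.mpr le_sup_right
  rw [sup_sdiff, h1, sup_bot_eq, ← sdiff_sdiff, sdiff_sup_self]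

/-- Congruence of the three lattice operations modulo a common "error" element `W`. -/
private lemma stmt10_congr {W a b c d : 𝓑} (h1 : a ⊔ W = b ⊔ W) (h2 : c ⊔ W = d ⊔ W) :
    (a ⊔ c) ⊔ W = (b ⊔ d) ⊔ W ∧ (a ⊓ c) ⊔ W = (b ⊓ d) ⊔ W ∧ (a \ c) ⊔ W = (b \ d) ⊔ W := by
  refine ⟨?_, ?_, ?_⟩
  · calc (a ⊔ c) ⊔ W = (a ⊔ W) ⊔ (c ⊔ W) := by ac_rfl
    _ = (b ⊔ W) ⊔ (d ⊔ W) := by rw [h1, h2]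
    _ = (b ⊔ d) ⊔ W := by ac_rfl
  · rw [sup_inf_right, sup_inf_right, h1, h2]
  · rw [← stmt10_sdiff_key a c W, h1, h2, stmt10_sdiff_key]

/-- The relation "equal modulo `K`". -/
private def stmt10_rel (K : Set 𝓑) (a b : 𝓑) : Prop := ∃ U ∈ K, a ⊔ U = b ⊔ U

private lemma stmt10_rel_ops {K : Set 𝓑} (hK : ∀ x ∈ K, ∀ y ∈ K, x ⊔ y ∈ K)
    {a b c d : 𝓑} (h1 : stmt10_rel K a b) (h2 : stmt10_rel K c d) :
    stmt10_rel K (a ⊔ c) (b ⊔ d) ∧ stmt10_rel K (a ⊓ c) (b ⊓ d) ∧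
      stmt10_rel K (a \ c) (b \ d) := by
  obtain ⟨U, hU, hUe⟩ := h1
  obtain ⟨V, hV, hVe⟩ := h2
  have hW : U ⊔ V ∈ K := hK U hU V hV
  have e1 : a ⊔ (U ⊔ V) = b ⊔ (U ⊔ V) := by
    rw [← sup_assoc, ← sup_assoc, hUe]
  have e2 : c ⊔ (U ⊔ V) = d ⊔ (U ⊔ V) := by
    rw [sup_comm U V, ← sup_assoc, ← sup_assoc, hVe]
  obtain ⟨g1, g2, g3⟩ := stmt10_congr e1 e2
  exact ⟨⟨U ⊔ V, hW, g1⟩, ⟨U ⊔ V, hW, g2⟩, ⟨U ⊔ V, hW, g3⟩⟩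

end Stmt10Aux

/-- For a relative generalized Boolean dynamical system
(B,L,θ,I,J), the set B̃ = {(A,[B]_J) : A,B ∈ B, [A]_{B_reg} = [B]_{B_reg}} with
coordinatewise operations is a generalized Boolean algebra, and its regular
ideal is B̃_reg = {(A,[∅]_J) : A ∈ B_reg}.  Here [·]_J is realized as the
quotient by the setoid sJ (specified by A ~ B ↔ ∃ U ∈ J, A ⊔ U = B ⊔ U), B_reg
is the ideal of regular sets, and regularity in B̃ is defined via the maps
θ̃_a(A,[B]_J) = (θ_a(A), [θ_a(A)]_J), whose Δ-sets are {a : θ_a(A) ≠ ⊥}. -/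
theorem stmt10 {𝓑 L : Type*} [GeneralizedBooleanAlgebra 𝓑]
    (θ : L → 𝓑 → 𝓑)
    (hθbot : ∀ a, θ a ⊥ = ⊥)
    (hθsup : ∀ a (x y : 𝓑), θ a (x ⊔ y) = θ a x ⊔ θ a y)
    (hθinf : ∀ a (x y : 𝓑), θ a (x ⊓ y) = θ a x ⊓ θ a y)
    (Breg J : Set 𝓑)
    (hreg : Breg = {A : 𝓑 | ∀ B' : 𝓑, B' ≤ A → B' ≠ ⊥ →
      {a : L | θ a B' ≠ ⊥}.Finite ∧ {a : L | θ a B' ≠ ⊥}.Nonempty})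
    (hJreg : J ⊆ Breg)
    (hJsup : ∀ x ∈ J, ∀ y ∈ J, x ⊔ y ∈ J)
    (hJdown : ∀ x ∈ J, ∀ y : 𝓑, y ≤ x → y ∈ J)
    (sJ : Setoid 𝓑)
    (hsJ : ∀ a b : 𝓑, sJ.r a b ↔ ∃ U ∈ J, a ⊔ U = b ⊔ U) :
    ∃ inst : GeneralizedBooleanAlgebra
      {x : 𝓑 × Quotient sJ //
        ∃ C : 𝓑, x.2 = Quotient.mk sJ C ∧ ∃ U ∈ Breg, x.1 ⊔ U = C ⊔ U},
      letI := inst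
      -- the operations are coordinatewise (on representatives in the second coordinate)
      (∀ (x y : {x : 𝓑 × Quotient sJ //
          ∃ C : 𝓑, x.2 = Quotient.mk sJ C ∧ ∃ U ∈ Breg, x.1 ⊔ U = C ⊔ U})
         (A C A' C' : 𝓑),
          x.1 = (A, Quotient.mk sJ C) → y.1 = (A', Quotient.mk sJ C') →
          (x ⊔ y).1 = (A ⊔ A', Quotient.mk sJ (C ⊔ C')) ∧
          (x ⊓ y).1 = (A ⊓ A', Quotient.mk sJ (C ⊓ C')) ∧
          (x \ y).1 = (A \ A', Quotient.mk sJ (C \ C'))) ∧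
      ((⊥ : {x : 𝓑 × Quotient sJ //
          ∃ C : 𝓑, x.2 = Quotient.mk sJ C ∧ ∃ U ∈ Breg, x.1 ⊔ U = C ⊔ U}).1 =
        (⊥, Quotient.mk sJ ⊥)) ∧
      -- the regular ideal of B̃ is {(A, [∅]_J) : A ∈ B_reg}
      ({x : {x : 𝓑 × Quotient sJ //
          ∃ C : 𝓑, x.2 = Quotient.mk sJ C ∧ ∃ U ∈ Breg, x.1 ⊔ U = C ⊔ U} |
          ∀ y, y ≤ x → y ≠ ⊥ →
            {a : L | θ a y.1.1 ≠ ⊥}.Finite ∧ {a : L | θ a y.1.1 ≠ ⊥}.Nonempty} =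
        {x | ∃ A ∈ Breg, x.1 = (A, Quotient.mk sJ ⊥)}) := by
  classical
  have hθle : ∀ a : L, ∀ x y : 𝓑, x ≤ y → θ a x ≤ θ a y := by
    intro a x y hxy
    have : θ a x ⊔ θ a y = θ a y := by rw [← hθsup, sup_eq_right.2 hxy]
    exact sup_eq_right.1 this
  have hregmem : ∀ A : 𝓑, A ∈ Breg ↔ (∀ B' : 𝓑, B' ≤ A → B' ≠ ⊥ →
      {a : L | θ a B' ≠ ⊥}.Finite ∧ {a : L | θ a B' ≠ ⊥}.Nonempty) := by
    intro A; rw [hreg]; exact Iff.rfl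
  have hBregBot : (⊥ : 𝓑) ∈ Breg := by
    rw [hreg]
    intro B' hB' hB'ne
    exact absurd (le_bot_iff.1 hB') hB'ne
  have hBregDown : ∀ x ∈ Breg, ∀ y : 𝓑, y ≤ x → y ∈ Breg := by
    rw [hreg]
    intro x hx y hyx B' hB' hB'ne
    exact hx B' (hB'.trans hyx) hB'ne
  have hBregSup : ∀ x ∈ Breg, ∀ y ∈ Breg, x ⊔ y ∈ Breg := by
    rw [hreg]
    intro x hx y hy B' hB' hB'ne
    have hsplit : B' = B' ⊓ x ⊔ B' \ x := (sup_inf_sdiff B' x).symm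
    have hp : B' ⊓ x ≤ x := inf_le_right
    have hq : B' \ x ≤ y := by
      have h := sdiff_le_sdiff_right (c := x) hB'
      exact h.trans (sdiff_le_iff.2 le_rfl)
    have hsub : {a : L | θ a B' ≠ ⊥} ⊆
        {a : L | θ a (B' ⊓ x) ≠ ⊥} ∪ {a : L | θ a (B' \ x) ≠ ⊥} := by
      intro a ha
      by_contra hcon
      simp only [Set.mem_union, Set.mem_setOf_eq, not_or, not_not] at hcon
      apply ha
      calc θ a B' = θ a (B' ⊓ x ⊔ B' \ x) := by rw [← hsplit]
      _ = θ a (B' ⊓ x) ⊔ θ a (B' \ x) := hθsup _ _ _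
      _ = ⊥ := by rw [hcon.1, hcon.2, sup_bot_eq]
    have hfin1 : {a : L | θ a (B' ⊓ x) ≠ ⊥}.Finite := by
      by_cases h : B' ⊓ x = ⊥
      · rw [h]; simp [hθbot]
      · exact (hx _ hp h).1
    have hfin2 : {a : L | θ a (B' \ x) ≠ ⊥}.Finite := by
      by_cases h : B' \ x = ⊥
      · rw [h]; simp [hθbot]
      · exact (hy _ hq h).1
    have hmono : ∀ z : 𝓑, z ≤ B' → {a : L | θ a z ≠ ⊥} ⊆ {a : L | θ a B' ≠ ⊥} := by
      intro z hz a ha hcon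
      exact ha (le_bot_iff.1 (hcon ▸ hθle a z B' hz))
    refine ⟨(hfin1.union hfin2).subset hsub, ?_⟩
    by_cases h : B' ⊓ x = ⊥
    · have hq' : B' \ x ≠ ⊥ := by
        intro hcon
        apply hB'ne
        rw [hsplit, h, hcon, sup_bot_eq]
      obtain ⟨a, ha⟩ := (hy _ hq hq').2
      exact ⟨a, hmono _ sdiff_le ha⟩
    · obtain ⟨a, ha⟩ := (hx _ hp h).2
      exact ⟨a, hmono _ inf_le_left ha⟩
  have hrelJ : ∀ a b : 𝓑, sJ.r a b ↔ stmt10_rel J a b := by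
    intro a b; rw [hsJ]; exact Iff.rfl
  letI : Setoid 𝓑 := sJ
  have hbotJ : ∀ c : 𝓑, Quotient.mk sJ c = Quotient.mk sJ ⊥ ↔ c ∈ J := by
    intro c
    constructor
    · intro h
      obtain ⟨U, hU, hUe⟩ := (hsJ c ⊥).1 (Quotient.exact h)
      rw [bot_sup_eq] at hUe
      exact hJdown U hU c (hUe ▸ le_sup_left)
    · intro h
      refine Quotient.sound ((hsJ _ _).2 ⟨c, h, ?_⟩)
      rw [sup_idem, bot_sup_eq]
  -- the quotient generalized Boolean algebra
  letI qSup : Max (Quotient sJ) :=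
    ⟨Quotient.map₂ (· ⊔ ·) fun a b hab c d hcd =>
      (hrelJ _ _).2 (stmt10_rel_ops hJsup ((hrelJ _ _).1 hab) ((hrelJ _ _).1 hcd)).1⟩
  letI qInf : Min (Quotient sJ) :=
    ⟨Quotient.map₂ (· ⊓ ·) fun a b hab c d hcd =>
      (hrelJ _ _).2 (stmt10_rel_ops hJsup ((hrelJ _ _).1 hab) ((hrelJ _ _).1 hcd)).2.1⟩
  letI qSDiff : SDiff (Quotient sJ) :=
    ⟨Quotient.map₂ (· \ ·) fun a b hab c d hcd =>
      (hrelJ _ _).2 (stmt10_rel_ops hJsup ((hrelJ _ _).1 hab) ((hrelJ _ _).1 hcd)).2.2⟩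
  letI qBot : Bot (Quotient sJ) := ⟨Quotient.mk sJ ⊥⟩
  letI qLat : Lattice (Quotient sJ) :=
    Lattice.mk'
      (fun x y => Quotient.inductionOn₂ x y fun a b => congrArg (Quotient.mk sJ) (sup_comm a b))
      (fun x y z => Quotient.inductionOn₃ x y z fun a b c =>
        congrArg (Quotient.mk sJ) (sup_assoc a b c))
      (fun x y => Quotient.inductionOn₂ x y fun a b => congrArg (Quotient.mk sJ) (inf_comm a b))
      (fun x y z => Quotient.inductionOn₃ x y z fun a b c =>
        congrArg (Quotient.mk sJ) (inf_assoc a b c))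
      (fun x y => Quotient.inductionOn₂ x y fun a b =>
        congrArg (Quotient.mk sJ) (sup_inf_self (a := a) (b := b)))
      (fun x y => Quotient.inductionOn₂ x y fun a b =>
        congrArg (Quotient.mk sJ) (inf_sup_self (a := a) (b := b)))
  letI qDistrib : DistribLattice (Quotient sJ) :=
    { qLat with
      le_sup_inf := fun x y z => by
        refine Quotient.inductionOn₃ x y z fun a b c => ?_
        refine sup_eq_right.1 ?_
        show Quotient.mk sJ (((a ⊔ b) ⊓ (a ⊔ c)) ⊔ (a ⊔ b ⊓ c)) = Quotient.mk sJ (a ⊔ b ⊓ c)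
        refine congrArg (Quotient.mk sJ) ?_
        rw [← sup_inf_left, sup_idem] }
  letI qGBA : GeneralizedBooleanAlgebra (Quotient sJ) :=
    { qDistrib, qSDiff, qBot with
      sup_inf_sdiff := fun x y => Quotient.inductionOn₂ x y fun a b =>
        congrArg (Quotient.mk sJ) (sup_inf_sdiff a b)
      inf_inf_sdiff := fun x y => Quotient.inductionOn₂ x y fun a b =>
        congrArg (Quotient.mk sJ) (inf_inf_sdiff a b) }
  letI qLE : LE (Quotient sJ) := qGBA.toLE
  letI qLT : LT (Quotient sJ) := qGBA.toLT
  have qle_of_le : ∀ a b : 𝓑, a ≤ b → (Quotient.mk sJ a ≤ Quotient.mk sJ b) := by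
    intro a b h
    refine sup_eq_right.1 ?_
    exact congrArg (Quotient.mk sJ) (sup_eq_right.2 h)
  have qle_trans : ∀ p q r : Quotient sJ, p ≤ q → q ≤ r → p ≤ r := fun p q r =>
    @le_trans _ qGBA.toGeneralizedCoheytingAlgebra.toLattice.toSemilatticeInf.toPartialOrder.toPreorder p q r
  have qle_of_eq : ∀ a b : 𝓑, a ≈ b → Quotient.mk sJ a ≤ Quotient.mk sJ b := by
    intro a b hab
    rw [Quotient.sound hab]
    exact qle_of_le _ _ le_rfl
  have hqle : ∀ p q : Quotient sJ, @LE.le _ Quotient.instLE_mathlib p q ↔ p ≤ q := by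
    intro p q
    refine Quotient.inductionOn₂ p q fun a b => ?_
    constructor
    · intro h
      have h' : Relation.TransGen (fun x y : 𝓑 => x ≤ y ∨ x ≈ y) a b := h
      clear h
      induction h' with
      | single hab =>
        rcases hab with hab | hab
        · exact qle_of_le _ _ hab
        · exact qle_of_eq _ _ hab
      | tail _ hbc ih =>
        refine qle_trans _ _ _ ih ?_
        rcases hbc with hbc | hbc
        · exact qle_of_le _ _ hbc
        · exact qle_of_eq _ _ hbc
    · intro h
      have h' : Quotient.mk sJ a ⊔ Quotient.mk sJ b = Quotient.mk sJ b := sup_eq_right.2 h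
      exact Relation.TransGen.tail (Relation.TransGen.single (Or.inl le_sup_left))
        (Or.inr (Quotient.exact (s := sJ) (a := a ⊔ b) (b := b) h'))
  -- the subtype and its operations
  have hPsup : ∀ x y : 𝓑 × Quotient sJ,
      (∃ C : 𝓑, x.2 = Quotient.mk sJ C ∧ ∃ U ∈ Breg, x.1 ⊔ U = C ⊔ U) →
      (∃ C : 𝓑, y.2 = Quotient.mk sJ C ∧ ∃ U ∈ Breg, y.1 ⊔ U = C ⊔ U) →
      (∃ C : 𝓑, (x ⊔ y).2 = Quotient.mk sJ C ∧ ∃ U ∈ Breg, (x ⊔ y).1 ⊔ U = C ⊔ U) := by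
    rintro x y ⟨C, hC, hrel⟩ ⟨C', hC', hrel'⟩
    refine ⟨C ⊔ C', ?_, ?_⟩
    · show x.2 ⊔ y.2 = _
      rw [hC, hC']; rfl
    · exact (stmt10_rel_ops hBregSup hrel hrel').1
  have hPinf : ∀ x y : 𝓑 × Quotient sJ,
      (∃ C : 𝓑, x.2 = Quotient.mk sJ C ∧ ∃ U ∈ Breg, x.1 ⊔ U = C ⊔ U) →
      (∃ C : 𝓑, y.2 = Quotient.mk sJ C ∧ ∃ U ∈ Breg, y.1 ⊔ U = C ⊔ U) →
      (∃ C : 𝓑, (x ⊓ y).2 = Quotient.mk sJ C ∧ ∃ U ∈ Breg, (x ⊓ y).1 ⊔ U = C ⊔ U) := by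
    rintro x y ⟨C, hC, hrel⟩ ⟨C', hC', hrel'⟩
    refine ⟨C ⊓ C', ?_, ?_⟩
    · show x.2 ⊓ y.2 = _
      rw [hC, hC']; rfl
    · exact (stmt10_rel_ops hBregSup hrel hrel').2.1
  have hPsdiff : ∀ x y : 𝓑 × Quotient sJ,
      (∃ C : 𝓑, x.2 = Quotient.mk sJ C ∧ ∃ U ∈ Breg, x.1 ⊔ U = C ⊔ U) →
      (∃ C : 𝓑, y.2 = Quotient.mk sJ C ∧ ∃ U ∈ Breg, y.1 ⊔ U = C ⊔ U) →
      (∃ C : 𝓑, (x \ y).2 = Quotient.mk sJ C ∧ ∃ U ∈ Breg, (x \ y).1 ⊔ U = C ⊔ U) := by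
    rintro x y ⟨C, hC, hrel⟩ ⟨C', hC', hrel'⟩
    refine ⟨C \ C', ?_, ?_⟩
    · show x.2 \ y.2 = _
      rw [hC, hC']; rfl
    · exact (stmt10_rel_ops hBregSup hrel hrel').2.2
  letI sSup : Max {x : 𝓑 × Quotient sJ //
      ∃ C : 𝓑, x.2 = Quotient.mk sJ C ∧ ∃ U ∈ Breg, x.1 ⊔ U = C ⊔ U} :=
    ⟨fun x y => ⟨x.1 ⊔ y.1, hPsup _ _ x.2 y.2⟩⟩
  letI sInf : Min {x : 𝓑 × Quotient sJ //
      ∃ C : 𝓑, x.2 = Quotient.mk sJ C ∧ ∃ U ∈ Breg, x.1 ⊔ U = C ⊔ U} :=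
    ⟨fun x y => ⟨x.1 ⊓ y.1, hPinf _ _ x.2 y.2⟩⟩
  letI sSDiff : SDiff {x : 𝓑 × Quotient sJ //
      ∃ C : 𝓑, x.2 = Quotient.mk sJ C ∧ ∃ U ∈ Breg, x.1 ⊔ U = C ⊔ U} :=
    ⟨fun x y => ⟨x.1 \ y.1, hPsdiff _ _ x.2 y.2⟩⟩
  letI sBot : Bot {x : 𝓑 × Quotient sJ //
      ∃ C : 𝓑, x.2 = Quotient.mk sJ C ∧ ∃ U ∈ Breg, x.1 ⊔ U = C ⊔ U} :=
    ⟨⟨⊥, ⟨⊥, rfl, ⟨⊥, hBregBot, rfl⟩⟩⟩⟩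
  letI sLT : LT {x : 𝓑 × Quotient sJ //
      ∃ C : 𝓑, x.2 = Quotient.mk sJ C ∧ ∃ U ∈ Breg, x.1 ⊔ U = C ⊔ U} :=
    ⟨fun x y => x ≤ y ∧ ¬ y ≤ x⟩
  letI instS : GeneralizedBooleanAlgebra {x : 𝓑 × Quotient sJ //
      ∃ C : 𝓑, x.2 = Quotient.mk sJ C ∧ ∃ U ∈ Breg, x.1 ⊔ U = C ⊔ U} :=
    Function.Injective.generalizedBooleanAlgebra Subtype.val Subtype.val_injective
      Iff.rfl (fun {x y} => (@lt_iff_le_not_ge _ (GeneralizedBooleanAlgebra.toGeneralizedCoheytingAlgebra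
        (α := 𝓑 × Quotient sJ)).toLattice.toSemilatticeInf.toPartialOrder.toPreorder
        (x : 𝓑 × Quotient sJ) y).trans Iff.rfl)
      (fun _ _ => rfl) (fun _ _ => rfl) rfl (fun _ _ => rfl)
  have sle : ∀ a b : {x : 𝓑 × Quotient sJ //
      ∃ C : 𝓑, x.2 = Quotient.mk sJ C ∧ ∃ U ∈ Breg, x.1 ⊔ U = C ⊔ U},
      a ≤ b ↔ a.1 ≤ b.1 := by
    intro a b
    rw [← sup_eq_right, ← sup_eq_right (a := a.1) (b := b.1)]
    constructor
    · intro h; exact congrArg Subtype.val h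
    · intro h; exact Subtype.ext h
  have sbot1 : (⊥ : {x : 𝓑 × Quotient sJ //
      ∃ C : 𝓑, x.2 = Quotient.mk sJ C ∧ ∃ U ∈ Breg, x.1 ⊔ U = C ⊔ U}).1 =
      ((⊥ : 𝓑), Quotient.mk sJ ⊥) := rfl
  have hconv : ∀ y x : {x : 𝓑 × Quotient sJ //
      ∃ C : 𝓑, x.2 = Quotient.mk sJ C ∧ ∃ U ∈ Breg, x.1 ⊔ U = C ⊔ U}, y ≤ x ↔
      @LE.le _ (@Subtype.instLE _ (@Prod.instLE_mathlib 𝓑 (Quotient sJ) _ Quotient.instLE_mathlib) _)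
        y x := by
    intro y x
    exact and_congr Iff.rfl (hqle _ _).symm
  refine ⟨instS, ?_, ?_, ?_⟩
  · -- coordinatewise operations
    intro x y A C A' C' hx hy
    refine ⟨?_, ?_, ?_⟩
    · show x.1 ⊔ y.1 = _
      rw [hx, hy]; rfl
    · show x.1 ⊓ y.1 = _
      rw [hx, hy]; rfl
    · show x.1 \ y.1 = _
      rw [hx, hy]; rfl
  · exact sbot1
  · -- the regular ideal
    ext x
    simp only [Set.mem_setOf_eq]
    constructor
    · intro hx
      obtain ⟨C, hC, U, hU, hUe⟩ := x.2
      have hABreg : x.1.1 ∈ Breg := by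
        refine (hregmem _).2 ?_
        intro B' hB' hB'ne
        have hmem : ∃ C0 : 𝓑, ((B', Quotient.mk sJ (B' ⊓ C)) : 𝓑 × Quotient sJ).2 =
            Quotient.mk sJ C0 ∧ ∃ U0 ∈ Breg,
              ((B', Quotient.mk sJ (B' ⊓ C)) : 𝓑 × Quotient sJ).1 ⊔ U0 = C0 ⊔ U0 := by
          refine ⟨B' ⊓ C, rfl, U, hU, ?_⟩
          have h1 : B' ⊔ U ≤ C ⊔ U := by
            have h := sup_le_sup_right hB' U
            rwa [hUe] at h
          rw [sup_inf_right]
          exact (inf_eq_left.2 h1).symm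
        set y : {x : 𝓑 × Quotient sJ //
            ∃ C : 𝓑, x.2 = Quotient.mk sJ C ∧ ∃ U ∈ Breg, x.1 ⊔ U = C ⊔ U} :=
          ⟨(B', Quotient.mk sJ (B' ⊓ C)), hmem⟩ with hy
        have hyx : y ≤ x := by
          refine (sle y x).2 (Prod.le_def.2 ⟨hB', ?_⟩)
          show Quotient.mk sJ (B' ⊓ C) ≤ x.1.2
          rw [hC]
          exact qle_of_le _ _ inf_le_right
        have hyne : y ≠ ⊥ := by
          intro hcon
          exact hB'ne (congrArg (fun z : {x : 𝓑 × Quotient sJ //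
            ∃ C : 𝓑, x.2 = Quotient.mk sJ C ∧ ∃ U ∈ Breg, x.1 ⊔ U = C ⊔ U} => z.1.1) hcon)
        exact hx y ((hconv y x).1 hyx) hyne
      have hsmall : ∀ c : 𝓑, c ≤ C → c ∈ Breg → c ∈ J := by
        intro c hcC hcB
        by_contra hcJ
        have hmem : ∃ C0 : 𝓑, ((⊥, Quotient.mk sJ c) : 𝓑 × Quotient sJ).2 =
            Quotient.mk sJ C0 ∧ ∃ U0 ∈ Breg,
              ((⊥, Quotient.mk sJ c) : 𝓑 × Quotient sJ).1 ⊔ U0 = C0 ⊔ U0 :=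
          ⟨c, rfl, c, hcB, by rw [bot_sup_eq, sup_idem]⟩
        set y : {x : 𝓑 × Quotient sJ //
            ∃ C : 𝓑, x.2 = Quotient.mk sJ C ∧ ∃ U ∈ Breg, x.1 ⊔ U = C ⊔ U} :=
          ⟨(⊥, Quotient.mk sJ c), hmem⟩ with hy
        have hyx : y ≤ x := by
          refine (sle y x).2 (Prod.le_def.2 ⟨bot_le, ?_⟩)
          show Quotient.mk sJ c ≤ x.1.2
          rw [hC]
          exact qle_of_le _ _ hcC
        have hyne : y ≠ ⊥ := by
          intro hcon
          apply hcJ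
          refine (hbotJ c).1 ?_
          exact congrArg (fun z : {x : 𝓑 × Quotient sJ //
            ∃ C : 𝓑, x.2 = Quotient.mk sJ C ∧ ∃ U ∈ Breg, x.1 ⊔ U = C ⊔ U} => z.1.2) hcon
        obtain ⟨-, a, ha⟩ := hx y ((hconv y x).1 hyx) hyne
        exact ha (hθbot a)
      have h1 : C \ x.1.1 ∈ Breg := by
        refine hBregDown U hU _ ?_
        have hCle : C ≤ x.1.1 ⊔ U := le_sup_left.trans_eq hUe.symm
        have h2 : C \ x.1.1 ≤ (x.1.1 ⊔ U) \ x.1.1 := sdiff_le_sdiff_right hCle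
        exact h2.trans (sdiff_le_iff.2 le_rfl)
      have h2 : C \ x.1.1 ∈ J := hsmall _ sdiff_le h1
      have h3 : C ⊓ x.1.1 ∈ J :=
        hsmall _ inf_le_left (hBregDown _ hABreg _ inf_le_right)
      have h4 : C ∈ J := by
        have h := hJsup _ h3 _ h2
        rwa [sup_inf_sdiff] at h
      refine ⟨x.1.1, hABreg, ?_⟩
      refine Prod.ext rfl ?_
      show x.1.2 = Quotient.mk sJ ⊥
      rw [hC]
      exact (hbotJ C).2 h4
    · rintro ⟨A, hA, hx1⟩ y hyx hyne
      have hle0 := (sle y x).1 ((hconv y x).2 hyx)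
      rw [hx1] at hle0
      have hle := Prod.le_def.1 hle0
      have h2 : y.1.2 = Quotient.mk sJ ⊥ := by
        have hb : y.1.2 ≤ (⊥ : Quotient sJ) := hle.2
        exact le_bot_iff.1 hb
      have h1 : y.1.1 ≠ ⊥ := by
        intro hcon
        apply hyne
        refine Subtype.ext ?_
        rw [sbot1]
        exact Prod.ext hcon h2
      exact (hregmem A).1 hA y.1.1 hle.1 h1
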